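/- Let S be a locally finite circle packing with at most countably many accumulation points, and suppose the tangency graph G_S has an infinite connected component. Then there exists an infinite sequence of distinct disks s₀, s₁, … with sₙ tangent to sₙ₊₁ for all n, such that the sequence of centers either converges to a point of ℝ² which is an accumulation point of S, or tends to infinity (so that d(s₀, sₙ) → ∞). -/

import Mathlib

open Set Filter MeasureTheory

noncomputable section

/-- Points of the plane (Euclidean metric). -/
abbrev Pt := EuclideanSpace ℝ (Fin 2)

/-- The closed disk with center `s.1` and radius `s.2`. -/
def disk (s : Pt × ℝ) : Set Pt := Metric.closedBall s.1 s.2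

/-- Two disks are tangent when the distance of centers equals the sum of the radii. -/
def Tangent (s t : Pt × ℝ) : Prop := dist s.1 t.1 = s.2 + t.2

/-- ℓ∞-distance between two points of the plane. -/
def dinf (x y : Pt) : ℝ := max |x 0 - y 0| |x 1 - y 1|

/-- ℓ∞-distance between two subsets of the plane. -/
def sDistInf (A B : Set Pt) : ℝ := sInf (Set.image2 dinf A B)

/-- `a` and `b` are connected by a finite path of tangent disks of `S`. -/
def Conn (S : Set (Pt × ℝ)) (a b : Pt × ℝ) : Prop :=
  ∃ (n : ℕ) (f : ℕ → Pt × ℝ), f 0 = a ∧ f n = b ∧ (∀ i ≤ n, f i ∈ S) ∧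
    ∀ i < n, Tangent (f i) (f (i+1))

/-- The accumulation points of a circle packing. -/
def accPts (S : Set (Pt × ℝ)) : Set Pt :=
  {z | ∀ ε > (0:ℝ), {s ∈ S | (disk s ∩ Metric.ball z ε).Nonempty}.Infinite}

/-! ### Auxiliary material: König's lemma construction -/

/-- Connectivity through paths avoiding the set `A`. -/
def ConnAvoid (S : Set (Pt × ℝ)) (A : Set (Pt × ℝ)) (a b : Pt × ℝ) : Prop :=
  ∃ (n : ℕ) (f : ℕ → Pt × ℝ), f 0 = a ∧ f n = b ∧ (∀ i ≤ n, f i ∈ S ∧ f i ∉ A) ∧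
    ∀ i < n, Tangent (f i) (f (i+1))

lemma connAvoid_empty (S : Set (Pt × ℝ)) (a b : Pt × ℝ) :
    ConnAvoid S ∅ a b ↔ Conn S a b := by
  constructor <;> rintro ⟨n, f, h0, h1, h2, h3⟩
  · exact ⟨n, f, h0, h1, fun i hi => (h2 i hi).1, h3⟩
  · exact ⟨n, f, h0, h1, fun i hi => ⟨h2 i hi, notMem_empty _⟩, h3⟩

/-- König pigeonhole step: from a vertex with infinitely many reachable targets
(avoiding `A`) there is a neighbor with infinitely many reachable targets
avoiding `insert v A`. -/
lemma exists_next (S : Set (Pt × ℝ)) (hlocfin : ∀ s ∈ S, {t ∈ S | t ≠ s ∧ Tangent s t}.Finite)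
    (v : Pt × ℝ) (A : Set (Pt × ℝ)) (hv : v ∈ S)
    (hinf : {t | ConnAvoid S A v t}.Infinite) :
    ∃ w, w ∈ S ∧ Tangent v w ∧ w ∉ insert v A ∧
      {t | ConnAvoid S (insert v A) w t}.Infinite := by
  classical
  set Nb : Set (Pt × ℝ) := {t ∈ S | t ≠ v ∧ Tangent v t} with hNbdef
  have hNbfin : Nb.Finite := hlocfin v hv
  have hcover : {t | ConnAvoid S A v t} ⊆
      {v} ∪ ⋃ w ∈ Nb, {t | ConnAvoid S (insert v A) w t} := by
    intro t ht
    by_cases htv : t = v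
    · exact Or.inl (by simp [htv])
    refine Or.inr ?_
    obtain ⟨n, f, hf0, hfn, hmem, htan⟩ := ht
    set k := Nat.findGreatest (fun i => f i = v) n with hkdef
    have hk : f k = v :=
      Nat.findGreatest_spec (P := fun i => f i = v) (Nat.zero_le n) hf0
    have hkn : k ≤ n := Nat.findGreatest_le n
    have hklt : k < n := lt_of_le_of_ne hkn (fun h => htv (by rw [← hfn, ← h, hk]))
    have hne : ∀ i, k < i → i ≤ n → f i ≠ v := fun i h1 h2 =>
      Nat.findGreatest_is_greatest h1 h2
    have hw1 : k + 1 ≤ n := hklt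
    refine mem_iUnion₂.2 ⟨f (k+1), ?_, ?_⟩
    · exact ⟨(hmem _ hw1).1, hne _ (Nat.lt_succ_self k) hw1, by rw [← hk]; exact htan k hklt⟩
    · refine ⟨n - (k+1), fun i => f (k+1+i), rfl,
        by show f (k+1+(n-(k+1))) = t
           have hnn : k+1+(n-(k+1)) = n := by omega
           rw [hnn]; exact hfn, ?_, ?_⟩
      · intro i hi
        have h1 : k+1+i ≤ n := by omega
        refine ⟨(hmem _ h1).1, ?_⟩
        simp only [mem_insert_iff, not_or]
        exact ⟨hne _ (by omega) h1, (hmem _ h1).2⟩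
      · intro i hi
        have h2 := htan (k+1+i) (by omega)
        show Tangent (f (k+1+i)) (f (k+1+(i+1)))
        have h3 : k+1+(i+1) = k+1+i+1 := by omega
        rw [h3]
        exact h2
  have hex : ∃ w ∈ Nb, {t | ConnAvoid S (insert v A) w t}.Infinite := by
    by_contra h
    push_neg at h
    have hfin : ({v} ∪ ⋃ w ∈ Nb, {t | ConnAvoid S (insert v A) w t}).Finite :=
      (finite_singleton v).union
        (hNbfin.biUnion (fun w hw => (h w hw)))
    exact hinf (hfin.subset hcover)
  obtain ⟨w, hw, hwinf⟩ := hex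
  obtain ⟨t, ht⟩ := hwinf.nonempty
  obtain ⟨m, g, hg0, -, hgmem, -⟩ := ht
  have hwA : w ∉ insert v A := by
    have := (hgmem 0 (Nat.zero_le m)).2
    rwa [hg0] at this
  exact ⟨w, hw.1, hw.2.2, hwA, hwinf⟩

open Classical in
/-- One step of the König construction. -/
def nextStep (S : Set (Pt × ℝ)) (p : (Pt × ℝ) × Set (Pt × ℝ)) : (Pt × ℝ) × Set (Pt × ℝ) :=
  if h : ∃ w, w ∈ S ∧ Tangent p.1 w ∧ w ∉ insert p.1 p.2 ∧
      {t | ConnAvoid S (insert p.1 p.2) w t}.Infinite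
  then (h.choose, insert p.1 p.2) else p

/-- The König sequence of (current vertex, used vertices). -/
def kseq (S : Set (Pt × ℝ)) (s₀ : Pt × ℝ) : ℕ → (Pt × ℝ) × Set (Pt × ℝ)
  | 0 => (s₀, ∅)
  | n+1 => nextStep S (kseq S s₀ n)

/-- König's lemma: an infinite ray in the tangency graph. -/
lemma exists_ray (S : Set (Pt × ℝ))
    (hlocfin : ∀ s ∈ S, {t ∈ S | t ≠ s ∧ Tangent s t}.Finite)
    (hinf : ∃ s₀ ∈ S, {t | Conn S s₀ t}.Infinite) :
    ∃ f : ℕ → Pt × ℝ, Function.Injective f ∧ (∀ n, f n ∈ S) ∧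
      ∀ n, Tangent (f n) (f (n+1)) := by
  classical
  obtain ⟨s₀, hs₀, hs₀inf⟩ := hinf
  set F : ℕ → Pt × ℝ := fun n => (kseq S s₀ n).1 with hF
  set A : ℕ → Set (Pt × ℝ) := fun n => (kseq S s₀ n).2 with hA
  have h0inf : {t | ConnAvoid S ∅ s₀ t}.Infinite := by
    have : {t | ConnAvoid S ∅ s₀ t} = {t | Conn S s₀ t} := by
      ext t; exact connAvoid_empty S s₀ t
    rw [this]; exact hs₀inf
  have key : ∀ n, F n ∈ S ∧ F n ∉ A n ∧ {t | ConnAvoid S (A n) (F n) t}.Infinite := by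
    intro n
    induction n with
    | zero => exact ⟨hs₀, notMem_empty _, h0inf⟩
    | succ n ih =>
      obtain ⟨h1, h2, h3⟩ := ih
      have cond : ∃ w, w ∈ S ∧ Tangent (F n) w ∧ w ∉ insert (F n) (A n) ∧
          {t | ConnAvoid S (insert (F n) (A n)) w t}.Infinite :=
        exists_next S hlocfin (F n) (A n) h1 h3
      have hstep : kseq S s₀ (n+1) = (cond.choose, insert (F n) (A n)) := by
        have h4 : kseq S s₀ (n+1) = nextStep S (kseq S s₀ n) := rfl
        rw [h4, nextStep, dif_pos cond]
      have hcs := cond.choose_spec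
      have hF1 : F (n+1) = cond.choose := congrArg Prod.fst hstep
      have hA1 : A (n+1) = insert (F n) (A n) := congrArg Prod.snd hstep
      rw [hF1, hA1]
      exact ⟨hcs.1, hcs.2.2.1, hcs.2.2.2⟩
  have hstepEq : ∀ n, A (n+1) = insert (F n) (A n) ∧ Tangent (F n) (F (n+1)) := by
    intro n
    obtain ⟨h1, h2, h3⟩ := key n
    have cond : ∃ w, w ∈ S ∧ Tangent (F n) w ∧ w ∉ insert (F n) (A n) ∧
        {t | ConnAvoid S (insert (F n) (A n)) w t}.Infinite :=
      exists_next S hlocfin (F n) (A n) h1 h3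
    have hstep : kseq S s₀ (n+1) = (cond.choose, insert (F n) (A n)) := by
      have h4 : kseq S s₀ (n+1) = nextStep S (kseq S s₀ n) := rfl
      rw [h4, nextStep, dif_pos cond]
    have hcs := cond.choose_spec
    have hF1 : F (n+1) = cond.choose := congrArg Prod.fst hstep
    have hA1 : A (n+1) = insert (F n) (A n) := congrArg Prod.snd hstep
    exact ⟨hA1, by rw [hF1]; exact hcs.2.1⟩
  have hmono : ∀ m n, m ≤ n → A m ⊆ A n := by
    intro m n hmn
    induction n with
    | zero => simp_all
    | succ n ih =>
      rcases Nat.lt_or_ge m (n+1) with h | h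
      · have := ih (by omega)
        rw [(hstepEq n).1]
        exact this.trans (subset_insert _ _)
      · have : m = n + 1 := by omega
        subst this; exact subset_rfl
  have hFmem : ∀ m n, m < n → F m ∈ A n := by
    intro m n hmn
    have h1 : F m ∈ A (m+1) := by rw [(hstepEq m).1]; exact mem_insert _ _
    exact hmono (m+1) n hmn h1
  have hneq : ∀ m n, m < n → F m ≠ F n := by
    intro m n hmn h
    have h1 := hFmem m n hmn
    have h2 := (key n).2.1
    rw [h] at h1
    exact h2 h1
  refine ⟨F, ?_, fun n => (key n).1, fun n => (hstepEq n).2⟩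
  intro a b hab
  rcases lt_trichotomy a b with h | h | h
  · exact absurd hab (hneq a b h)
  · exact h
  · exact absurd hab.symm (hneq b a h)

/-! ### Auxiliary material: geometric analysis -/

/-- A compact set met by infinitely many disks of the sequence yields a cluster point. -/
lemma exists_clusterPoint (f : ℕ → Pt × ℝ) {K : Set Pt} (hK : IsCompact K)
    (h : {n | (disk (f n) ∩ K).Nonempty}.Infinite) :
    ∃ q ∈ K, ∀ ε > (0:ℝ), {n | (disk (f n) ∩ Metric.ball q ε).Nonempty}.Infinite := by
  classical
  set N := {n | (disk (f n) ∩ K).Nonempty} with hN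
  have hy : ∀ n : N, ∃ y, y ∈ disk (f (n : ℕ)) ∧ y ∈ K := by
    rintro ⟨n, hn⟩
    obtain ⟨y, hy1, hy2⟩ := hn
    exact ⟨y, hy1, hy2⟩
  choose y hy1 hy2 using hy
  set e : ℕ ↪ N := h.natEmbedding _
  obtain ⟨q, hqK, φ, hφ, hconv⟩ := hK.tendsto_subseq (x := fun k => y (e k)) (fun k => hy2 _)
  refine ⟨q, hqK, fun ε hε => ?_⟩
  obtain ⟨k₀, hk₀⟩ := (Metric.tendsto_atTop.1 hconv) ε hε
  refine infinite_of_injective_forall_mem (f := fun k : ℕ => ((e (φ (k₀ + k))) : ℕ)) ?_ ?_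
  · intro a b hab
    have := e.injective (Subtype.ext hab)
    have := hφ.injective this
    omega
  · intro k
    refine ⟨y (e (φ (k₀ + k))), hy1 _, ?_⟩
    exact Metric.mem_ball.2 (hk₀ (k₀ + k) (Nat.le_add_right _ _))

/-- Two tangent disks with positive radii intersect. -/
lemma tangent_inter {s t : Pt × ℝ} (hs : 0 < s.2) (ht : 0 < t.2) (h : Tangent s t) :
    (disk s ∩ disk t).Nonempty := by
  have hpos : 0 < s.2 + t.2 := by linarith
  set c : ℝ := s.2 / (s.2 + t.2) with hc
  have hc0 : 0 ≤ c := div_nonneg hs.le hpos.le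
  have hc1 : c ≤ 1 := (div_le_one hpos).2 (by linarith)
  refine ⟨s.1 + c • (t.1 - s.1), ?_, ?_⟩
  · show _ ∈ Metric.closedBall s.1 s.2
    rw [Metric.mem_closedBall, dist_eq_norm]
    have h1 : s.1 + c • (t.1 - s.1) - s.1 = c • (t.1 - s.1) := by abel
    rw [h1, norm_smul, Real.norm_eq_abs, abs_of_nonneg hc0]
    have h2 : ‖t.1 - s.1‖ = dist s.1 t.1 := by rw [dist_comm, dist_eq_norm]
    rw [h2, h]
    rw [hc, div_mul_cancel₀ _ hpos.ne']
  · show _ ∈ Metric.closedBall t.1 t.2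
    rw [Metric.mem_closedBall, dist_eq_norm]
    have h1 : s.1 + c • (t.1 - s.1) - t.1 = (c - 1) • (t.1 - s.1) := by
      rw [sub_smul, one_smul]; abel
    rw [h1, norm_smul, Real.norm_eq_abs, abs_of_nonpos (by linarith)]
    have h2 : ‖t.1 - s.1‖ = dist s.1 t.1 := by rw [dist_comm, dist_eq_norm]
    rw [h2, h]
    have : -(c - 1) * (s.2 + t.2) = t.2 := by
      rw [hc]; field_simp; ring
    linarith [this]

/-- Intermediate value: a preconnected set meeting the inside and outside of a sphere
meets the sphere. -/
lemma cross_sphere {U : Set Pt} (hU : IsPreconnected U) {q a b : Pt} (ha : a ∈ U) (hb : b ∈ U)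
    {ρ : ℝ} (h1 : dist a q ≤ ρ) (h2 : ρ ≤ dist b q) : ∃ x ∈ U, dist x q = ρ := by
  have hcont : ContinuousOn (fun x : Pt => dist x q) U :=
    (Continuous.dist continuous_id continuous_const).continuousOn
  have himg : IsPreconnected ((fun x : Pt => dist x q) '' U) := hU.image _ hcont
  have hρ : ρ ∈ (fun x : Pt => dist x q) '' U :=
    himg.ordConnected.out (mem_image_of_mem _ ha) (mem_image_of_mem _ hb) ⟨h1, h2⟩
  obtain ⟨x, hx, hxρ⟩ := hρ
  exact ⟨x, hx, hxρ⟩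

/-- An infinite set of naturals contains arbitrarily large elements. -/
lemma Set.Infinite.exists_ge' {s : Set ℕ} (hs : s.Infinite) (N : ℕ) : ∃ n ∈ s, N ≤ n := by
  by_contra h
  push_neg at h
  exact hs ((finite_Iio N).subset (fun n hn => h n hn))

/-- Key convergence lemma: if the packing has countably many accumulation points and `q`
is a cluster point of the disks of an injective tangency ray, then the disks eventually
lie in any given ball around `q`. -/
lemma eventually_subset (S : Set (Pt × ℝ)) (hrad : ∀ s ∈ S, 0 < s.2)
    (hacc : (accPts S).Countable)
    (f : ℕ → Pt × ℝ) (hinj : Function.Injective f) (hmem : ∀ n, f n ∈ S)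
    (htan : ∀ n, Tangent (f n) (f (n+1))) (q : Pt)
    (hq : ∀ ε > (0:ℝ), {n | (disk (f n) ∩ Metric.ball q ε).Nonempty}.Infinite)
    {r : ℝ} (hr : 0 < r) : ∀ᶠ n in atTop, disk (f n) ⊆ Metric.ball q r := by
  classical
  by_contra hcon
  have hfreq : ∀ N : ℕ, ∃ n, N ≤ n ∧ ∃ x ∈ disk (f n), r ≤ dist x q := by
    intro N
    rw [Filter.not_eventually] at hcon
    obtain ⟨n, hn, hx⟩ := (frequently_atTop.1 hcon) N
    rw [not_subset] at hx
    obtain ⟨x, hx1, hx2⟩ := hx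
    exact ⟨n, hn, x, hx1, le_of_not_gt (fun hlt => hx2 (Metric.mem_ball.2 hlt))⟩
  -- for every ρ ∈ (r/2, r), infinitely many disks meet the sphere of radius ρ
  have hsphere : ∀ ρ ∈ Ioo (r/2) r,
      {n | (disk (f n) ∩ Metric.sphere q ρ).Nonempty}.Infinite := by
    intro ρ hρ
    apply Set.infinite_of_forall_exists_gt
    intro N
    -- the union of disks from index N+1 on is preconnected
    set U : Set Pt := ⋃ k, disk (f (N + 1 + k)) with hU
    have hUpre : IsPreconnected U := by
      apply IsPreconnected.iUnion_of_chain
      · intro k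
        exact (convex_closedBall _ _).isPreconnected
      · intro k
        have h1 : (N + 1 + (Order.succ k)) = (N + 1 + k) + 1 := by
          simp [Order.succ_eq_add_one]; ring
        rw [h1]
        exact tangent_inter (hrad _ (hmem _)) (hrad _ (hmem _)) (htan (N + 1 + k))
    -- a point of U close to q
    obtain ⟨n₁, hn₁mem, hn₁⟩ := (hq (r/2) (by linarith)).exists_ge' (N+1)
    obtain ⟨a, ha1, ha2⟩ := hn₁mem
    have haU : a ∈ U := by
      apply mem_iUnion.2 ⟨n₁ - (N+1), ?_⟩
      have : N + 1 + (n₁ - (N+1)) = n₁ := by omega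
      rw [this]; exact ha1
    -- a point of U far from q
    obtain ⟨n₂, hn₂, b, hb1, hb2⟩ := hfreq (N+1)
    have hbU : b ∈ U := by
      apply mem_iUnion.2 ⟨n₂ - (N+1), ?_⟩
      have : N + 1 + (n₂ - (N+1)) = n₂ := by omega
      rw [this]; exact hb1
    have hadist : dist a q ≤ ρ := by
      have := Metric.mem_ball.1 ha2
      linarith [hρ.1]
    have hbdist : ρ ≤ dist b q := by linarith [hρ.2]
    obtain ⟨x, hxU, hxρ⟩ := cross_sphere hUpre haU hbU hadist hbdist
    obtain ⟨k, hk⟩ := mem_iUnion.1 hxU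
    exact ⟨N + 1 + k, ⟨x, hk, Metric.mem_sphere.2 hxρ⟩, by omega⟩
  -- each such sphere carries an accumulation point at distance exactly ρ from q
  have hpoint : ∀ ρ : Ioo (r/2) r, ∃ p, p ∈ accPts S ∧ dist p q = (ρ : ℝ) := by
    rintro ⟨ρ, hρ⟩
    obtain ⟨p, hpK, hp⟩ := exists_clusterPoint f (isCompact_sphere q ρ) (hsphere ρ hρ)
    refine ⟨p, ?_, Metric.mem_sphere.1 hpK⟩
    intro ε hε
    have h1 := hp ε hε
    have h2 : (fun n => f n) '' {n | (disk (f n) ∩ Metric.ball p ε).Nonempty} ⊆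
        {s ∈ S | (disk s ∩ Metric.ball p ε).Nonempty} := by
      rintro s ⟨n, hn, rfl⟩
      exact ⟨hmem n, hn⟩
    exact ((h1.image hinj.injOn).mono h2)
  choose P hP1 hP2 using hpoint
  -- P is injective into the countable set of accumulation points: contradiction
  have hPinj : Function.Injective P := by
    intro a b hab
    apply Subtype.ext
    rw [← hP2 a, ← hP2 b, hab]
  have hcount : Countable (Ioo (r/2) r : Set ℝ) := by
    have : Countable (accPts S) := hacc.to_subtype
    exact Function.Injective.countable
      (f := fun ρ : Ioo (r/2) r => (⟨P ρ, hP1 ρ⟩ : accPts S))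
      (fun a b hab => hPinj (congrArg Subtype.val hab))
  have hvol : (volume (Ioo (r/2) r)).toReal = 0 := by
    rw [(Set.countable_coe_iff.1 hcount).measure_zero]
    simp
  rw [Real.volume_Ioo, ENNReal.toReal_ofReal (by linarith)] at hvol
  linarith

/-! ### Main theorem -/

/-- a locally finite circle packing with at most countably many
accumulation points whose tangency graph has an infinite connected component
admits an infinite tangency path whose centers either converge to an
accumulation point or tend to infinity (in which case `d(s₀,sₙ) → ∞`). -/
theorem stmt10 (S : Set (Pt × ℝ))
    (hrad : ∀ s ∈ S, 0 < s.2)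
    (hdisj : S.Pairwise fun s t => Disjoint (interior (disk s)) (interior (disk t)))
    (hlocfin : ∀ s ∈ S, {t ∈ S | t ≠ s ∧ Tangent s t}.Finite)
    (hacc : (accPts S).Countable)
    (hinf : ∃ s₀ ∈ S, {t | Conn S s₀ t}.Infinite) :
    ∃ f : ℕ → Pt × ℝ, Function.Injective f ∧ (∀ n, f n ∈ S) ∧
      (∀ n, Tangent (f n) (f (n+1))) ∧
      ((∃ q ∈ accPts S, Tendsto (fun n => (f n).1) atTop (nhds q)) ∨
        (Tendsto (fun n => ‖(f n).1‖) atTop atTop ∧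
          Tendsto (fun n => sDistInf (disk (f 0)) (disk (f n))) atTop atTop)) := by
  classical
  obtain ⟨f, hinj, hmem, htan⟩ := exists_ray S hlocfin hinf
  refine ⟨f, hinj, hmem, htan, ?_⟩
  have hcself : ∀ n, (f n).1 ∈ disk (f n) :=
    fun n => Metric.mem_closedBall_self (hrad _ (hmem n)).le
  by_cases hC : ∃ q : Pt, ∀ ε > (0:ℝ), {n | (disk (f n) ∩ Metric.ball q ε).Nonempty}.Infinite
  · -- convergence to an accumulation point
    obtain ⟨q, hq⟩ := hC
    left
    have hqacc : q ∈ accPts S := by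
      intro ε hε
      have h2 : (fun n => f n) '' {n | (disk (f n) ∩ Metric.ball q ε).Nonempty} ⊆
          {s ∈ S | (disk s ∩ Metric.ball q ε).Nonempty} := by
        rintro s ⟨n, hn, rfl⟩
        exact ⟨hmem n, hn⟩
      exact (((hq ε hε).image hinj.injOn).mono h2)
    refine ⟨q, hqacc, ?_⟩
    rw [Metric.tendsto_atTop]
    intro ε hε
    have := eventually_subset S hrad hacc f hinj hmem htan q hq hε
    obtain ⟨N, hN⟩ := eventually_atTop.1 this
    exact ⟨N, fun n hn => Metric.mem_ball.1 (hN n hn (hcself n))⟩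
  · -- escape to infinity
    push_neg at hC
    right
    have hfin : ∀ R : ℝ, {n | (disk (f n) ∩ Metric.closedBall 0 R).Nonempty}.Finite := by
      intro R
      by_contra h
      obtain ⟨q, -, hq⟩ := exists_clusterPoint f (isCompact_closedBall (0:Pt) R) h
      obtain ⟨ε, hε, hnot⟩ := hC q
      exact (hq ε hε) hnot
    have hev : ∀ R : ℝ, ∀ᶠ n in atTop, disk (f n) ∩ Metric.closedBall 0 R = ∅ := by
      intro R
      have := (hfin R).eventually_cofinite_notMem
      rw [Nat.cofinite_eq_atTop] at this
      filter_upwards [this] with n hn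
      rw [← not_nonempty_iff_eq_empty]
      exact hn
    constructor
    · rw [tendsto_atTop]
      intro b
      filter_upwards [hev (max b 0)] with n hn
      have h1 : (f n).1 ∉ Metric.closedBall (0:Pt) (max b 0) := by
        intro h
        exact (eq_empty_iff_forall_notMem.1 hn) _ ⟨hcself n, h⟩
      rw [Metric.mem_closedBall, dist_zero_right] at h1
      push_neg at h1
      exact le_trans (le_max_left b 0) h1.le
    · rw [tendsto_atTop]
      intro b
      set R0 : ℝ := ‖(f 0).1‖ + (f 0).2 with hR0
      filter_upwards [hev (max (2*b + R0) 0)] with n hn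
      -- every point of disk (f n) has norm > 2b + R0
      have hfar : ∀ y ∈ disk (f n), 2*b + R0 < ‖y‖ := by
        intro y hy
        have h1 : y ∉ Metric.closedBall (0:Pt) (max (2*b + R0) 0) := by
          intro h
          exact (eq_empty_iff_forall_notMem.1 hn) _ ⟨hy, h⟩
        rw [Metric.mem_closedBall, dist_zero_right] at h1
        push_neg at h1
        exact lt_of_le_of_lt (le_max_left _ _) h1
      have hnear : ∀ x ∈ disk (f 0), ‖x‖ ≤ R0 := by
        intro x hx
        have h1 : dist x (f 0).1 ≤ (f 0).2 := Metric.mem_closedBall.1 hx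
        calc ‖x‖ ≤ ‖(f 0).1‖ + dist x (f 0).1 := by
              rw [dist_eq_norm]
              have := norm_add_le ((f 0).1) (x - (f 0).1)
              simpa using this
          _ ≤ R0 := by rw [hR0]; linarith
      -- lower bound for the ℓ∞ distance
      apply le_csInf
      · exact ⟨dinf (f 0).1 (f n).1, mem_image2_of_mem (hcself 0) (hcself n)⟩
      · rintro d ⟨x, hx, y, hy, rfl⟩
        have h1 : 2*b ≤ dist x y := by
          have := norm_sub_norm_le y x
          have h2 : ‖y - x‖ = dist x y := by rw [dist_comm, dist_eq_norm]
          have h3 := hfar y hy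
          have h4 := hnear x hx
          linarith [h2 ▸ this]
        have h2 : dist x y ≤ 2 * dinf x y := by
          have he : dist x y = Real.sqrt (dist (x 0) (y 0)^2 + dist (x 1) (y 1)^2) := by
            rw [EuclideanSpace.dist_eq, Fin.sum_univ_two]
          have hsq : Real.sqrt (dist (x 0) (y 0)^2 + dist (x 1) (y 1)^2) ≤
              |x 0 - y 0| + |x 1 - y 1| := by
            rw [Real.dist_eq, Real.dist_eq]
            have h5 : |x 0 - y 0|^2 + |x 1 - y 1|^2 ≤ (|x 0 - y 0| + |x 1 - y 1|)^2 := by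
              nlinarith [abs_nonneg (x 0 - y 0), abs_nonneg (x 1 - y 1)]
            calc Real.sqrt (|x 0 - y 0|^2 + |x 1 - y 1|^2) ≤
                Real.sqrt ((|x 0 - y 0| + |x 1 - y 1|)^2) := Real.sqrt_le_sqrt h5
              _ = |x 0 - y 0| + |x 1 - y 1| := Real.sqrt_sq (by positivity)
          have h6 : |x 0 - y 0| + |x 1 - y 1| ≤ 2 * dinf x y := by
            rw [dinf]
            have := le_max_left |x 0 - y 0| |x 1 - y 1|
            have := le_max_right |x 0 - y 0| |x 1 - y 1|
            linarith
          calc dist x y = _ := he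
            _ ≤ _ := hsq
            _ ≤ _ := h6
        linarith

end
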